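/- Let h̄ ∈ Λ̂₀ be a local functional with ∂h̄/∂u = 0. Then there exist a constant α ∈ ℂ and a differential polynomial h ∈ 𝒜̂₀ with ∂h/∂u₀ = 0 such that h̄ = α·∫u₀ dx + ∫h dx. -/

import Mathlib

open scoped Classical
open PowerSeries

noncomputable section

namespace RiemannPaper

/-- ℂ[[u₀]] -/
abbrev RR : Type := PowerSeries ℂ
/-- 𝒜 = ℂ[[u₀]][u₁,u₂,…] -/
abbrev AA : Type := MvPolynomial ℕ+ RR
/-- 𝒜̂ = 𝒜[[ε]] -/
abbrev AH : Type := PowerSeries AA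

/-- the variable uₙ as an element of 𝒜 (u₀ is the power-series variable of the coefficients) -/
def uv (n : ℕ) : AA :=
  if h : 0 < n then MvPolynomial.X (⟨n, h⟩ : ℕ+) else MvPolynomial.C PowerSeries.X

/-- ∂/∂u₀ on 𝒜 -/
def pd0 (f : AA) : AA :=
  ∑ m ∈ f.support, MvPolynomial.monomial m (PowerSeries.derivativeFun (MvPolynomial.coeff m f))

/-- ∂/∂uₙ on 𝒜 -/
def pdA : ℕ → AA → AA
  | 0 => pd0
  | (n+1) => fun f => MvPolynomial.pderiv (⟨n+1, n.succ_pos⟩ : ℕ+) f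

/-- ∂ₓ on 𝒜 -/
def dxA (f : AA) : AA := ∑ᶠ n : ℕ, uv (n+1) * pdA n f

/-- coefficientwise (ℂ[[ε]]-linear) extension of an operator on 𝒜 to 𝒜̂ -/
def lift1 (F : AA → AA) (h : AH) : AH := PowerSeries.mk fun k => F (PowerSeries.coeff (R := AA) k h)

/-- ∂ₓ on 𝒜̂ -/
def dxH : AH → AH := lift1 dxA
/-- ∂/∂uₙ on 𝒜̂ -/
def pdH (n : ℕ) : AH → AH := lift1 (pdA n)
def negDxA (f : AA) : AA := -dxA f
def negDxH (h : AH) : AH := -dxH h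

/-- evolutionary operator D_P = ∑ₙ (∂ₓⁿP)·∂/∂uₙ on 𝒜 -/
def DopA (P f : AA) : AA := ∑ᶠ n : ℕ, (dxA^[n] P) * pdA n f
/-- evolutionary operator D_P on 𝒜̂ -/
def DopH (P f : AH) : AH :=
  PowerSeries.mk fun k => ∑ᶠ n : ℕ, PowerSeries.coeff (R := AA) k ((dxH^[n] P) * pdH n f)

/-- variational derivative δ/δu = ∑ₙ(−∂ₓ)ⁿ∘∂/∂uₙ on 𝒜 -/
def varDA (f : AA) : AA := ∑ᶠ n : ℕ, negDxA^[n] (pdA n f)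
/-- variational derivative on 𝒜̂ -/
def varD (f : AH) : AH :=
  PowerSeries.mk fun k => ∑ᶠ n : ℕ, PowerSeries.coeff (R := AA) k (negDxH^[n] (pdH n f))

/-- weighted degree of a monomial, deg uₙ = n -/
def wdeg (m : ℕ+ →₀ ℕ) : ℕ := m.sum fun i e => (i : ℕ) * e
/-- f is homogeneous of differential degree d -/
def homogA (f : AA) (d : ℤ) : Prop := ∀ m ∈ f.support, (wdeg m : ℤ) = d
/-- f ∈ 𝒜̂_d (deg ε = −1) -/
def memAH (d : ℤ) (f : AH) : Prop := ∀ k : ℕ, homogA (PowerSeries.coeff (R := AA) k f) (d + k)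

/-- Im ∂ₓ ⊕ ℂ ⊂ 𝒜, so that Λ = 𝒜/NA -/
def NA : Submodule ℂ AA := Submodule.span ℂ (Set.range dxA ∪ Set.range (algebraMap ℂ AA))
/-- Im ∂ₓ ⊕ ℂ[[ε]] ⊂ 𝒜̂, so that Λ̂ = 𝒜̂/NH -/
def NH : Submodule ℂ AH :=
  Submodule.span ℂ (Set.range dxH ∪ Set.range (⇑(PowerSeries.map (algebraMap ℂ AA))))

/-- ε ∈ 𝒜̂ -/
def epsH : AH := PowerSeries.X
/-- uₙ as an element of 𝒜̂ -/
def uH (n : ℕ) : AH := PowerSeries.C (R := AA) (uv n)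

/-- a differential operator K = ∑ᵢ Kᵢ∂ₓ^i (finite sum) applied to f -/
def opApply (K : ℕ →₀ AH) (f : AH) : AH := K.sum fun i c => c * dxH^[i] f
/-- L(Q) = ∑ₙ(∂Q/∂uₙ)∂ₓⁿ applied to f -/
def Lapp (Q f : AH) : AH :=
  PowerSeries.mk fun k => ∑ᶠ n : ℕ, PowerSeries.coeff (R := AA) k (pdH n Q * dxH^[n] f)
/-- L(Q)† = ∑ₙ(−∂ₓ)ⁿ∘(∂Q/∂uₙ) applied to f -/
def LadjApp (Q f : AH) : AH :=
  PowerSeries.mk fun k => ∑ᶠ n : ℕ, PowerSeries.coeff (R := AA) k (negDxH^[n] (pdH n Q * f))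

/-- canonical representative of the bracket {f̄,h̄}_K = ∫ δf̄/δu · K(δh̄/δu) dx -/
def brRep (K : ℕ →₀ AH) (f h : AH) : AH := varD f * opApply K (varD h)
/-- K is a Poisson operator: the bracket is skew-symmetric and satisfies Jacobi (in Λ̂) -/
def IsPoisson (K : ℕ →₀ AH) : Prop :=
  (∀ f h : AH, brRep K f h + brRep K h f ∈ NH) ∧
  (∀ f g h : AH,
    brRep K (brRep K f g) h + brRep K (brRep K g h) f + brRep K (brRep K h f) g ∈ NH)

/-- K has degree 1 -/
def opDeg1 (K : ℕ →₀ AH) : Prop := ∀ i : ℕ, memAH (1 - (i : ℤ)) (K i)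
/-- K|_{ε=0} = ∂ₓ -/
def opEps0Dx (K : ℕ →₀ AH) : Prop :=
  ∀ i : ℕ, PowerSeries.coeff (R := AA) 0 (K i) = if i = 1 then 1 else 0

/-- g ∈ ℂ[[u₀]] as an element of 𝒜̂ -/
def cH (g : RR) : AH := PowerSeries.C (R := AA) (MvPolynomial.C g)
/-- truncation of an element of 𝒜̂ keeping the ε-coefficients up to εᵏ -/
def truncAH (k : ℕ) (h : AH) : AH :=
  ∑ i ∈ Finset.range (k+1), (PowerSeries.monomial (R := AA) i) (PowerSeries.coeff (R := AA) i h)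
/-- the Taylor evaluation g(w) for g ∈ ℂ[[u₀]] and w ≡ u₀ mod ε -/
def tayl (g : RR) (w : AH) : AH := PowerSeries.mk fun k =>
  PowerSeries.coeff (R := AA) k (∑ j ∈ Finset.range (k+1),
    ((j.factorial : ℂ))⁻¹ • (cH (PowerSeries.derivativeFun^[j] g) * (w - uH 0) ^ j))

/-- S is the substitution map S_w, the unique continuous ℂ[[ε]]-algebra endomorphism of 𝒜̂
with S(uₙ) = ∂ₓⁿ(w) -/
structure IsSubst (w : AH) (S : AH → AH) : Prop where
  map_add : ∀ a b, S (a + b) = S a + S b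
  map_mul : ∀ a b, S (a * b) = S a * S b
  map_one : S 1 = 1
  map_smul : ∀ (c : ℂ) (a), S (c • a) = c • S a
  map_eps : ∀ a, S (epsH * a) = epsH * S a
  map_u : ∀ n : ℕ, S (uH n) = dxH^[n] w
  map_ps : ∀ g : RR, S (cH g) = tayl g w
  cont : ∀ a (k : ℕ),
    PowerSeries.coeff (R := AA) k (S a) = PowerSeries.coeff (R := AA) k (S (truncAH k a))

/-- w is a Miura transformation: w = u₀ + εf, f ∈ 𝒜̂₁ -/
def isMiura (w : AH) : Prop := ∃ f : AH, memAH 1 f ∧ w = uH 0 + epsH * f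
/-- w belongs to Mi_{∂ₓ}: L(w)∘∂ₓ∘L(w)† = ∂ₓ -/
def inMiDx (w : AH) : Prop := ∀ f : AH, Lapp w (dxH (LadjApp w f)) = dxH f
/-- w is a normal Miura transformation: w = u₀ + ∂ₓ²P, P ∈ 𝒜̂₋₂ -/
def isNormalMiura (w : AH) : Prop := ∃ P : AH, memAH (-2) P ∧ w = uH 0 + dxH (dxH P)

/-- u_λ = ∏ᵢ u_{λᵢ} -/
def uP {n : ℕ} (l : n.Partition) : AA := (l.parts.map uv).prod
/-- the parts of λ sorted in decreasing order -/
def sortedParts {n : ℕ} (l : n.Partition) : List ℕ := (l.parts.sort (· ≤ ·)).reverse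
/-- lexicographic order on partitions -/
def lexLt {n : ℕ} (l m : n.Partition) : Prop :=
  List.Lex (· < ·) (sortedParts l) (sortedParts m)
def lexLe {n : ℕ} (l m : n.Partition) : Prop := lexLt l m ∨ l = m
/-- λ ∈ 𝒫ₙ°: at least two parts and λ₁ = λ₂ -/
def Pcirc {n : ℕ} (l : n.Partition) : Prop :=
  2 ≤ Multiset.card l.parts ∧ (sortedParts l).getD 0 0 = (sortedParts l).getD 1 0
/-- λ ∈ 𝒫ₙ′: λ ∈ 𝒫ₙ° and all parts ≥ 2 -/
def Pprime {n : ℕ} (l : n.Partition) : Prop := Pcirc l ∧ ∀ i ∈ l.parts, 2 ≤ i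
/-- (λ,1): adjoin a part equal to 1 -/
def addOne {n : ℕ} (l : n.Partition) : (n+1).Partition where
  parts := 1 ::ₘ l.parts
  parts_pos := by
    intro i hi
    rcases Multiset.mem_cons.mp hi with h | h
    · simp [h]
    · exact l.parts_pos h
  parts_sum := by simp [l.parts_sum, add_comm]


open MvPolynomial

/-- integration operator on ℂ[[u₀]] -/
def psInt (g : RR) : RR :=
  PowerSeries.mk fun n => if n = 0 then 0 else (n : ℂ)⁻¹ * PowerSeries.coeff (R := ℂ) (n-1) g

lemma coeff_psInt (g : RR) (n : ℕ) :
    PowerSeries.coeff (R := ℂ) n (psInt g) =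
      if n = 0 then 0 else (n : ℂ)⁻¹ * PowerSeries.coeff (R := ℂ) (n-1) g :=
  PowerSeries.coeff_mk _ _

/-- evaluation at u₀ = 0 operator on ℂ[[u₀]] -/
def psE (g : RR) : RR := PowerSeries.C (R := ℂ) (PowerSeries.constantCoeff (R := ℂ) g)

lemma psInt_add (a b : RR) : psInt (a + b) = psInt a + psInt b := by
  ext n
  simp only [coeff_psInt, map_add]
  split_ifs <;> ring

lemma psInt_zero : psInt 0 = 0 := by
  ext n; simp [coeff_psInt]

lemma psE_add (a b : RR) : psE (a + b) = psE a + psE b := by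
  simp [psE, map_add]

lemma psE_zero : psE 0 = 0 := by simp [psE]

lemma dF_zero : PowerSeries.derivativeFun (0 : RR) = 0 := by
  exact (PowerSeries.derivative ℂ).map_zero

lemma coeff_dF (f : RR) (n : ℕ) : PowerSeries.coeff (R := ℂ) n (PowerSeries.derivativeFun f)
    = PowerSeries.coeff (R := ℂ) (n + 1) f * (n + 1) := by
  rw [show PowerSeries.derivativeFun f = PowerSeries.derivative ℂ f from rfl,
    PowerSeries.coeff_derivative]

lemma psInt_dF (g : RR) : psInt (PowerSeries.derivativeFun g) = g - psE g := by
  ext n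
  rcases Nat.eq_zero_or_pos n with h | h
  · subst h
    simp [coeff_psInt, psE, PowerSeries.coeff_zero_eq_constantCoeff]
  · have hn : n ≠ 0 := h.ne'
    have h1 : n - 1 + 1 = n := Nat.succ_pred_eq_of_pos h
    rw [coeff_psInt, if_neg hn, coeff_dF, h1, map_sub]
    rw [psE, PowerSeries.coeff_C, if_neg hn]
    have : (n : ℂ) ≠ 0 := Nat.cast_ne_zero.mpr hn
    field_simp
    rw [← Nat.cast_add_one, h1]; ring

lemma dF_psInt (g : RR) : PowerSeries.derivativeFun (psInt g) = g := by
  ext n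
  rw [coeff_dF, coeff_psInt, if_neg (Nat.succ_ne_zero n)]
  simp only [Nat.add_sub_cancel]
  have h : ((n:ℂ) + 1) ≠ 0 := Nat.cast_add_one_ne_zero n
  field_simp
  push_cast; ring

lemma psInt_C (c : ℂ) : psInt (PowerSeries.C (R := ℂ) c) = c • PowerSeries.X := by
  ext n
  rw [coeff_psInt]
  simp only [PowerSeries.coeff_smul, PowerSeries.coeff_X, PowerSeries.coeff_C, smul_eq_mul]
  rcases Nat.eq_zero_or_pos n with h | h
  · simp [h]
  · have hn : n ≠ 0 := h.ne'
    rw [if_neg hn]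
    by_cases h1 : n = 1
    · subst h1; simp
    · have : n - 1 ≠ 0 := by omega
      simp [if_neg h1, this]

/-- apply φ to every coefficient of a polynomial -/
def cw (φ : RR → RR) (f : AA) : AA :=
  ∑ m ∈ f.support, monomial m (φ (coeff m f))

lemma pd0_eq_cw : pd0 = cw PowerSeries.derivativeFun := rfl

lemma coeff_cw {φ : RR → RR} (h0 : φ 0 = 0) (f : AA) (m : ℕ+ →₀ ℕ) :
    coeff m (cw φ f) = φ (coeff m f) := by
  rw [cw, coeff_sum]
  simp_rw [MvPolynomial.coeff_monomial]
  rw [Finset.sum_ite_eq' f.support m (fun m' => φ (coeff m' f))]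
  by_cases hm : m ∈ f.support
  · rw [if_pos hm]
  · rw [if_neg hm, notMem_support_iff.mp hm, h0]

lemma cw_add {φ : RR → RR} (h0 : φ 0 = 0)
    (hadd : ∀ a b, φ (a + b) = φ a + φ b) (f g : AA) :
    cw φ (f + g) = cw φ f + cw φ g := by
  apply MvPolynomial.ext
  intro m
  rw [coeff_add, coeff_cw h0, coeff_cw h0, coeff_cw h0, coeff_add, hadd]

lemma cw_zero {φ : RR → RR} (h0 : φ 0 = 0) : cw φ 0 = 0 := by
  apply MvPolynomial.ext
  intro m
  rw [coeff_cw h0]; simp [h0]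

lemma cw_monomial {φ : RR → RR} (h0 : φ 0 = 0) (m : ℕ+ →₀ ℕ) (g : RR) :
    cw φ (monomial m g) = monomial m (φ g) := by
  apply MvPolynomial.ext
  intro m'
  rw [coeff_cw h0, MvPolynomial.coeff_monomial, MvPolynomial.coeff_monomial, apply_ite φ, h0]

lemma cw_monomial_one_mul {φ : RR → RR} (h0 : φ 0 = 0) (s : ℕ+ →₀ ℕ) (f : AA) :
    cw φ (monomial s (1:RR) * f) = monomial s (1:RR) * cw φ f := by
  apply MvPolynomial.ext
  intro m
  rw [coeff_cw h0, coeff_monomial_mul', coeff_monomial_mul', apply_ite φ, h0, one_mul, one_mul,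
    coeff_cw h0]

/-- cw φ as an additive monoid hom, given additivity data -/
def cwHom (φ : RR → RR) (h0 : φ 0 = 0) (hadd : ∀ a b, φ (a + b) = φ a + φ b) : AA →+ AA :=
  AddMonoidHom.mk' (cw φ) (cw_add h0 hadd)

lemma cw_pderiv {φ : RR → RR} (h0 : φ 0 = 0) (hadd : ∀ a b, φ (a + b) = φ a + φ b)
    (s : ℕ+) (f : AA) : cw φ (pderiv s f) = pderiv s (cw φ f) := by
  have hn : ∀ (g : RR) (n : ℕ), φ (g * (n : RR)) = φ g * (n : RR) := by
    intro g n
    have h1 : g * (n : RR) = n • g := by rw [nsmul_eq_mul, mul_comm]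
    have h2 : φ g * (n : RR) = n • φ g := by rw [nsmul_eq_mul, mul_comm]
    rw [h1, h2]
    exact AddMonoidHom.map_nsmul (AddMonoidHom.mk' φ hadd) n g
  induction f using MvPolynomial.induction_on' with
  | monomial m g =>
    rw [cw_monomial h0, pderiv_monomial, pderiv_monomial, cw_monomial h0, hn]
  | add p q hp hq =>
    rw [map_add, cw_add h0 hadd, cw_add h0 hadd, map_add, hp, hq]

lemma wdeg_add (a b : ℕ+ →₀ ℕ) : wdeg (a + b) = wdeg a + wdeg b := by
  unfold wdeg
  apply Finsupp.sum_add_index' (by intro i; simp) (by intro i e1 e2; ring)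

lemma wdeg_single (i : ℕ+) (e : ℕ) : wdeg (Finsupp.single i e) = (i : ℕ) * e := by
  unfold wdeg
  apply Finsupp.sum_single_index
  simp

lemma wdeg_zero : wdeg 0 = 0 := by
  unfold wdeg; simp

lemma wdeg_eq_zero {m : ℕ+ →₀ ℕ} (h : wdeg m = 0) : m = 0 := by
  unfold wdeg at h
  rw [Finsupp.sum, Finset.sum_eq_zero_iff] at h
  ext i
  by_contra hi
  have hmem : i ∈ m.support := Finsupp.mem_support_iff.mpr (by simpa using hi)
  have := h i hmem
  have hpos : 0 < (i : ℕ) := i.pos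
  simp only [Finsupp.coe_zero, Pi.zero_apply] at hi
  have : m i = 0 := by
    rcases Nat.mul_eq_zero.mp this with h' | h'
    · omega
    · exact h'
  exact hi this

/-- projection onto the wdeg = d part -/
def pide (d : ℕ) (f : AA) : AA :=
  ∑ m ∈ f.support, if wdeg m = d then monomial m (coeff m f) else 0

lemma coeff_pide (d : ℕ) (f : AA) (m : ℕ+ →₀ ℕ) :
    coeff m (pide d f) = if wdeg m = d then coeff m f else 0 := by
  rw [pide, coeff_sum]
  have : ∀ m' ∈ f.support,
      coeff m (if wdeg m' = d then monomial m' (coeff m' f) else 0) =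
      if m' = m then (if wdeg m' = d then coeff m' f else 0) else 0 := by
    intro m' _
    split_ifs with h1 h2 h2 <;>
      simp_all [MvPolynomial.coeff_monomial]
  rw [Finset.sum_congr rfl this, Finset.sum_ite_eq' f.support m]
  by_cases hm : m ∈ f.support
  · rw [if_pos hm]
  · rw [if_neg hm, notMem_support_iff.mp hm]; split_ifs <;> rfl

lemma pide_add (d : ℕ) (a b : AA) : pide d (a + b) = pide d a + pide d b := by
  apply MvPolynomial.ext
  intro m
  simp only [coeff_pide, coeff_add]
  split_ifs <;> simp

/-- pide as an AddMonoidHom -/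
def pideHom (d : ℕ) : AA →+ AA := AddMonoidHom.mk' (pide d) (pide_add d)

lemma pide_zero (d : ℕ) : pide d 0 = 0 := (pideHom d).map_zero

lemma pide_monomial (d : ℕ) (m : ℕ+ →₀ ℕ) (g : RR) :
    pide d (monomial m g) = if wdeg m = d then monomial m g else 0 := by
  apply MvPolynomial.ext
  intro m'
  rw [coeff_pide]
  by_cases h : wdeg m' = d
  · rw [if_pos h, MvPolynomial.coeff_monomial]
    split_ifs with h1 h2 h2 <;> simp_all [MvPolynomial.coeff_monomial]
  · rw [if_neg h]
    split_ifs with h1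
    · rw [MvPolynomial.coeff_monomial]
      split_ifs with h2
      · subst h2; exact absurd h1 h
      · rfl
    · simp

lemma homogA_coeff_eq_zero {f : AA} {d : ℤ} (h : homogA f d) {m : ℕ+ →₀ ℕ}
    (hm : (wdeg m : ℤ) ≠ d) : coeff m f = 0 := by
  by_contra hc
  exact hm (h m (mem_support_iff.mpr hc))

lemma pide_of_homog {f : AA} {d : ℕ} (h : homogA f (d : ℤ)) : pide d f = f := by
  apply MvPolynomial.ext
  intro m
  rw [coeff_pide]
  by_cases hm : wdeg m = d
  · rw [if_pos hm]
  · rw [if_neg hm, homogA_coeff_eq_zero h (by exact_mod_cast hm)]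

lemma homogA_pide (d : ℕ) (f : AA) : homogA (pide d f) (d : ℤ) := by
  intro m hm
  rw [mem_support_iff, coeff_pide] at hm
  by_cases h : wdeg m = d
  · exact_mod_cast h
  · rw [if_neg h] at hm; exact absurd rfl hm

lemma homogA_of_support_subset {f g : AA} {d : ℤ} (h : homogA g d)
    (hs : f.support ⊆ g.support) : homogA f d := fun m hm => h m (hs hm)

lemma support_cw_subset {φ : RR → RR} (h0 : φ 0 = 0) (f : AA) :
    (cw φ f).support ⊆ f.support := by
  intro m hm
  rw [mem_support_iff, coeff_cw h0] at hm
  rw [mem_support_iff]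
  intro hc
  rw [hc, h0] at hm
  exact hm rfl

lemma uv_succ (n : ℕ) : uv (n+1) = MvPolynomial.X (⟨n+1, n.succ_pos⟩ : ℕ+) := by
  rw [uv, dif_pos n.succ_pos]; rfl

lemma uv_succ_monomial (n : ℕ) :
    uv (n+1) = monomial (Finsupp.single (α := ℕ+) ⟨n+1, n.succ_pos⟩ 1) (1 : RR) := uv_succ n

lemma uv_zero_eq : uv 0 = MvPolynomial.C PowerSeries.X := by
  rw [uv, dif_neg (lt_irrefl 0)]

lemma pdA_add (n : ℕ) (a b : AA) : pdA n (a + b) = pdA n a + pdA n b := by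
  cases n with
  | zero => exact cw_add dF_zero PowerSeries.derivativeFun_add a b
  | succ j => exact map_add _ a b

lemma pd0_smul (c : ℂ) (a : AA) : pd0 (c • a) = c • pd0 a := by
  apply MvPolynomial.ext
  intro m
  rw [pd0_eq_cw, coeff_cw dF_zero, MvPolynomial.coeff_smul, MvPolynomial.coeff_smul,
    coeff_cw dF_zero]
  have : (c • coeff m a : RR) = (c : ℂ) • coeff m a := rfl
  rw [this, PowerSeries.derivativeFun_smul]

lemma pdA_smul (n : ℕ) (c : ℂ) (a : AA) : pdA n (c • a) = c • pdA n a := by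
  cases n with
  | zero => exact pd0_smul c a
  | succ j =>
    exact (pderiv (⟨j+1, j.succ_pos⟩ : ℕ+)).toLinearMap.map_smul_of_tower c a

lemma pdA_zero_apply (n : ℕ) : pdA n (0 : AA) = 0 := by
  cases n with
  | zero => exact cw_zero dF_zero
  | succ j => exact map_zero _

lemma dxA_support_fin (f : AA) :
    (Function.support fun n => uv (n+1) * pdA n f).Finite := by
  apply Set.Finite.subset (Set.Finite.insert 0 (f.vars.finite_toSet.image PNat.val))
  intro n hn
  rw [Function.mem_support] at hn
  cases n with
  | zero => exact Set.mem_insert _ _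
  | succ j =>
    right
    by_contra hj
    have : (⟨j+1, j.succ_pos⟩ : ℕ+) ∉ f.vars := by
      intro hmem
      exact hj ⟨⟨j+1, j.succ_pos⟩, Finset.mem_coe.mpr hmem, rfl⟩
    have hz : pdA (j+1) f = 0 := pderiv_eq_zero_of_notMem_vars this
    rw [hz, mul_zero] at hn
    exact hn rfl

lemma dxA_add (a b : AA) : dxA (a + b) = dxA a + dxA b := by
  rw [dxA, dxA, dxA, ← finsum_add_distrib (dxA_support_fin a) (dxA_support_fin b)]
  apply finsum_congr
  intro n
  rw [pdA_add, mul_add]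

lemma dxA_smul (c : ℂ) (a : AA) : dxA (c • a) = c • dxA a := by
  rw [dxA, dxA]
  have h : ∀ n : ℕ, uv (n+1) * pdA n (c • a) = c • (uv (n+1) * pdA n a) := by
    intro n; rw [pdA_smul, mul_smul_comm]
  rw [finsum_congr h, smul_finsum' c (dxA_support_fin a)]

lemma dxA_zero : dxA (0 : AA) = 0 := by
  rw [dxA]
  apply finsum_eq_zero_of_forall_eq_zero
  intro n
  rw [pdA_zero_apply, mul_zero]

lemma AA_monomial_mul (s t : ℕ+ →₀ ℕ) (a b : RR) :
    (MvPolynomial.monomial s a : AA) * MvPolynomial.monomial t b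
      = MvPolynomial.monomial (s+t) (a*b) := MvPolynomial.monomial_mul

lemma AA_coeff_monomial_mul (m s : ℕ+ →₀ ℕ) (r : RR) (p : AA) :
    MvPolynomial.coeff m (MvPolynomial.monomial s r * p) =
      if s ≤ m then r * MvPolynomial.coeff (m - s) p else 0 :=
  MvPolynomial.coeff_monomial_mul' m s r p

lemma sub_single_add (m : ℕ+ →₀ ℕ) (i : ℕ+) (h : m i ≠ 0) :
    m - Finsupp.single i 1 + Finsupp.single i 1 = m := by
  ext j
  simp only [Finsupp.add_apply, Finsupp.tsub_apply, Finsupp.single_apply]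
  by_cases hj : i = j
  · subst hj
    rw [if_pos rfl]
    omega
  · simp [hj]

lemma wdeg_sub_single (m : ℕ+ →₀ ℕ) (i : ℕ+) (h : m i ≠ 0) :
    wdeg (m - Finsupp.single i 1) + (i : ℕ) = wdeg m := by
  conv_rhs => rw [← sub_single_add m i h]
  rw [wdeg_add, wdeg_single, mul_one]

lemma wdeg_single_mk (k e : ℕ) (h : 0 < k) :
    wdeg (Finsupp.single (α := ℕ+) ⟨k, h⟩ e) = k * e := wdeg_single _ e

lemma wdeg_sub_single_mk (m : ℕ+ →₀ ℕ) (k : ℕ) (h : 0 < k)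
    (hz : m ⟨k, h⟩ ≠ 0) :
    wdeg (m - Finsupp.single (α := ℕ+) ⟨k, h⟩ 1) + k = wdeg m :=
  wdeg_sub_single m _ hz

lemma pide_term (d n : ℕ) (f : AA) :
    pide (d+1) (uv (n+1) * pdA n f) = uv (n+1) * pdA n (pide d f) := by
  induction f using MvPolynomial.induction_on' with
  | add p q hp hq =>
    rw [pdA_add, mul_add, pide_add, hp, hq, pide_add, pdA_add, mul_add]
  | monomial m g =>
    cases n with
    | zero =>
      show pide (d+1) (uv 1 * pd0 _) = uv 1 * pd0 (pide d _)
      rw [pd0_eq_cw, cw_monomial dF_zero, pide_monomial, uv_succ_monomial 0, AA_monomial_mul,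
        one_mul, pide_monomial, wdeg_add, wdeg_single_mk]
      by_cases h : wdeg m = d
      · rw [if_pos (by omega), if_pos h, cw_monomial dF_zero, AA_monomial_mul, one_mul]
      · rw [if_neg (by omega), if_neg h, cw_zero dF_zero, mul_zero]
    | succ j =>
      show pide (d+1) (uv (j+2) * pderiv _ _) = uv (j+2) * pderiv _ (pide d _)
      rw [pderiv_monomial (σ := ℕ+) (i := ⟨j+1, j.succ_pos⟩), pide_monomial]
      by_cases hz : m (⟨j+1, j.succ_pos⟩ : ℕ+) = 0
      · rw [hz]
        simp only [Nat.cast_zero, mul_zero, monomial_zero, pide_zero]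
        split_ifs with h
        · rw [pderiv_monomial (σ := ℕ+) (i := ⟨j+1, j.succ_pos⟩), hz]
          simp
        · simp
      · rw [uv_succ_monomial (j+1), AA_monomial_mul, one_mul]
        have hw : wdeg (Finsupp.single (α := ℕ+) ⟨j+1+1, (j+1).succ_pos⟩ 1 +
            (m - Finsupp.single (α := ℕ+) ⟨j+1, j.succ_pos⟩ 1)) = wdeg m + 1 := by
          rw [wdeg_add, wdeg_single_mk]
          have h2 := wdeg_sub_single_mk m (j+1) j.succ_pos hz
          omega
        rw [pide_monomial, hw]
        by_cases h : wdeg m = d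
        · rw [if_pos (by omega), if_pos h, pderiv_monomial (σ := ℕ+) (i := ⟨j+1, j.succ_pos⟩), AA_monomial_mul, one_mul]
        · rw [if_neg (by omega), if_neg h, map_zero, mul_zero]

lemma pideHom_apply (d : ℕ) (f : AA) : pideHom d f = pide d f := rfl

lemma pide_dxA (d : ℕ) (f : AA) : pide (d+1) (dxA f) = dxA (pide d f) := by
  have h := (pideHom (d+1)).map_finsum (f := fun n => uv (n+1) * pdA n f) (dxA_support_fin f)
  rw [dxA, ← pideHom_apply, h, dxA]
  exact finsum_congr fun n => pide_term d n f

lemma coeff_zero_uv_mul (n : ℕ) (x : AA) :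
    MvPolynomial.coeff (0 : ℕ+ →₀ ℕ) (uv (n+1) * x) = 0 := by
  rw [uv_succ_monomial, AA_coeff_monomial_mul]
  rw [if_neg]
  intro hle
  have h2 := hle (⟨n+1, n.succ_pos⟩ : ℕ+)
  erw [Finsupp.single_eq_same] at h2; exact Nat.not_succ_le_zero 0 h2

lemma coeffAddMonoidHom_apply (m : ℕ+ →₀ ℕ) (f : AA) :
    MvPolynomial.coeffAddMonoidHom (R := RR) m f = MvPolynomial.coeff m f := rfl

lemma coeff_zero_dxA (f : AA) : MvPolynomial.coeff (0 : ℕ+ →₀ ℕ) (dxA f) = 0 := by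
  rw [dxA, ← coeffAddMonoidHom_apply]
  rw [(MvPolynomial.coeffAddMonoidHom (R := RR) (0 : ℕ+ →₀ ℕ)).map_finsum (dxA_support_fin f)]
  apply finsum_eq_zero_of_forall_eq_zero
  intro n
  exact coeff_zero_uv_mul n _

lemma pide_zero_dxA (f : AA) : pide 0 (dxA f) = 0 := by
  apply MvPolynomial.ext
  intro m
  rw [coeff_pide]
  split_ifs with h
  · rw [wdeg_eq_zero h, coeff_zero_dxA]; rfl
  · rfl

lemma Imap_pd0 (Q : AA) : cw psInt (pd0 Q) = Q - cw psE Q := by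
  apply MvPolynomial.ext
  intro m
  rw [coeff_cw psInt_zero, pd0_eq_cw, coeff_cw dF_zero, coeff_sub, coeff_cw psE_zero, psInt_dF]

lemma pd0_Imap (Q : AA) : pd0 (cw psInt Q) = Q := by
  apply MvPolynomial.ext
  intro m
  rw [pd0_eq_cw, coeff_cw dF_zero, coeff_cw psInt_zero, dF_psInt]

lemma cwHom_apply (φ : RR → RR) (h0 : φ 0 = 0) (hadd : ∀ a b, φ (a+b) = φ a + φ b) (f : AA) :
    cwHom φ h0 hadd f = cw φ f := rfl

lemma Imap_dxA (Q : AA) : cw psInt (dxA Q) = dxA (cw psInt Q) - uv 1 * cw psE Q := by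
  have key : ∀ n : ℕ, cw psInt (uv (n+1) * pdA n Q)
      = uv (n+1) * pdA n (cw psInt Q) + (if n = 0 then -(uv 1 * cw psE Q) else 0) := by
    intro n
    cases n with
    | zero =>
      show cw psInt (uv 1 * pd0 Q) = uv 1 * pd0 (cw psInt Q) + _
      rw [if_pos rfl, uv_succ_monomial 0, cw_monomial_one_mul psInt_zero,
        ← uv_succ_monomial 0, Imap_pd0, pd0_Imap]
      ring
    | succ j =>
      rw [if_neg (Nat.succ_ne_zero j), add_zero]
      show cw psInt (uv (j+2) * pderiv _ Q) = uv (j+2) * pderiv _ (cw psInt Q)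
      rw [uv_succ_monomial (j+1), cw_monomial_one_mul psInt_zero]
      erw [cw_pderiv psInt_zero psInt_add]
  have hfin2 : (Function.support fun n : ℕ =>
      (if n = 0 then -(uv 1 * cw psE Q) else 0)).Finite := by
    apply Set.Finite.subset (Set.finite_singleton 0)
    intro n hn
    rw [Function.mem_support] at hn
    by_contra hne
    simp only [Set.mem_singleton_iff] at hne
    rw [if_neg hne] at hn
    exact hn rfl
  have h1 : cw psInt (dxA Q) = ∑ᶠ n : ℕ, cw psInt (uv (n+1) * pdA n Q) := by
    rw [dxA, ← cwHom_apply psInt psInt_zero psInt_add,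
      (cwHom psInt psInt_zero psInt_add).map_finsum (dxA_support_fin Q)]
    exact finsum_congr fun n => rfl
  rw [h1, finsum_congr key,
    finsum_add_distrib (dxA_support_fin (cw psInt Q)) hfin2]
  have h2 : ∑ᶠ n : ℕ, (if n = 0 then -(uv 1 * cw psE Q) else 0) = -(uv 1 * cw psE Q) := by
    rw [finsum_eq_single _ 0 (fun b hb => if_neg hb), if_pos rfl]
  rw [h2, dxA]
  ring

lemma algebraMap_AA (c : ℂ) :
    algebraMap ℂ AA c = MvPolynomial.C (PowerSeries.C (R := ℂ) c) := by
  simp [MvPolynomial.algebraMap_def, PowerSeries.algebraMap_apply]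

lemma Imap_algebraMap (c : ℂ) : cw psInt (algebraMap ℂ AA c) = c • uv 0 := by
  rw [algebraMap_AA, MvPolynomial.C_apply, cw_monomial psInt_zero, psInt_C, uv_zero_eq,
    MvPolynomial.C_apply, MvPolynomial.smul_monomial]

lemma keyA (P Q : AA) (α : ℂ) (h : pd0 P = dxA Q + algebraMap ℂ AA α) :
    P = α • uv 0 + (cw psE P - uv 1 * cw psE Q) + dxA (cw psInt Q) := by
  have base : cw psInt (pd0 P) + cw psE P = P := by rw [Imap_pd0]; abel
  rw [h, cw_add psInt_zero psInt_add, Imap_dxA, Imap_algebraMap] at base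
  generalize hB : (cw psE P : AA) = B at base ⊢
  rw [← base]
  abel

lemma coeff_dxH (h : AH) (k : ℕ) :
    PowerSeries.coeff (R := AA) k (dxH h) = dxA (PowerSeries.coeff (R := AA) k h) := by
  unfold dxH lift1
  exact PowerSeries.coeff_mk _ _

lemma coeff_lift1 (F : AA → AA) (h : AH) (k : ℕ) :
    PowerSeries.coeff (R := AA) k (lift1 F h) = F (PowerSeries.coeff (R := AA) k h) :=
  PowerSeries.coeff_mk _ _

lemma AH_coeff_smul (c : ℂ) (x : AH) (k : ℕ) :
    PowerSeries.coeff (R := AA) k (c • x) = c • PowerSeries.coeff (R := AA) k x := rfl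

lemma CC_coeff_smul (c : ℂ) (x : PowerSeries ℂ) (k : ℕ) :
    PowerSeries.coeff (R := ℂ) k (c • x) = c • PowerSeries.coeff (R := ℂ) k x := rfl

/-- dxH as a ℂ-linear map -/
def dxHLM : AH →ₗ[ℂ] AH where
  toFun := dxH
  map_add' a b := by
    ext k
    rw [map_add, coeff_dxH, coeff_dxH, coeff_dxH, map_add, dxA_add]
  map_smul' c a := by
    ext k
    rw [RingHom.id_apply, coeff_dxH, AH_coeff_smul, AH_coeff_smul, coeff_dxH, dxA_smul]

/-- ℂ[[ε]] → 𝒜̂ as a ℂ-linear map -/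
def mapCLM : PowerSeries ℂ →ₗ[ℂ] AH where
  toFun := PowerSeries.map (algebraMap ℂ AA)
  map_add' a b := map_add _ a b
  map_smul' c ψ := by
    ext k
    rw [RingHom.id_apply, PowerSeries.coeff_map, AH_coeff_smul, PowerSeries.coeff_map,
      CC_coeff_smul]
    rw [smul_eq_mul, map_mul, Algebra.smul_def]

lemma NH_decomp {x : AH} (hx : x ∈ NH) :
    ∃ (g : AH) (ψ : PowerSeries ℂ),
      x = dxH g + PowerSeries.map (algebraMap ℂ AA) ψ := by
  rw [NH, Submodule.span_union] at hx
  rcases Submodule.mem_sup.mp hx with ⟨y, hy, z, hz, hsum⟩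
  have h1 : Submodule.span ℂ (Set.range dxH) ≤ LinearMap.range dxHLM := by
    rw [Submodule.span_le]
    rintro _ ⟨g, rfl⟩
    exact ⟨g, rfl⟩
  have h2 : Submodule.span ℂ (Set.range (⇑(PowerSeries.map (algebraMap ℂ AA)))) ≤
      LinearMap.range mapCLM := by
    rw [Submodule.span_le]
    rintro _ ⟨ψ, rfl⟩
    exact ⟨ψ, rfl⟩
  rcases h1 hy with ⟨g, hg⟩
  rcases h2 hz with ⟨ψ, hψ⟩
  exact ⟨g, ψ, by rw [← hsum, ← hg, ← hψ]; rfl⟩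

lemma dxH_mem_NH (G : AH) : dxH G ∈ NH :=
  Submodule.subset_span (Or.inl ⟨G, rfl⟩)

lemma pd0_cwE (f : AA) : pd0 (cw psE f) = 0 := by
  apply MvPolynomial.ext
  intro m
  rw [pd0_eq_cw, coeff_cw dF_zero, coeff_cw psE_zero, psE]
  rw [show ∀ c : ℂ, PowerSeries.derivativeFun (PowerSeries.C (R := ℂ) c) = 0 from
    fun c => PowerSeries.derivative_C]
  simp

lemma pd0_uv1_mul (x : AA) : pd0 (uv 1 * x) = uv 1 * pd0 x := by
  rw [pd0_eq_cw, uv_succ_monomial 0, cw_monomial_one_mul dF_zero]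

lemma homogA_uv1_mul {f : AA} {d : ℤ} (h : homogA f d) : homogA (uv 1 * f) (d + 1) := by
  intro m hm
  rw [mem_support_iff, uv_succ_monomial 0, AA_coeff_monomial_mul] at hm
  by_cases hle : Finsupp.single (α := ℕ+) ⟨0+1, Nat.succ_pos 0⟩ 1 ≤ m
  · rw [if_pos hle, one_mul] at hm
    have hmem : m - Finsupp.single (α := ℕ+) ⟨0+1, Nat.succ_pos 0⟩ 1 ∈ f.support :=
      mem_support_iff.mpr hm
    have hd := h _ hmem
    have hz : m (⟨0+1, Nat.succ_pos 0⟩ : ℕ+) ≠ 0 := by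
      have h1 := hle (⟨0+1, Nat.succ_pos 0⟩ : ℕ+)
      erw [Finsupp.single_eq_same] at h1
      omega
    have hw := wdeg_sub_single_mk m (0+1) (Nat.succ_pos 0) hz
    omega
  · rw [if_neg hle] at hm
    exact absurd rfl hm

lemma dF_sub (a b : RR) : PowerSeries.derivativeFun (a - b)
    = PowerSeries.derivativeFun a - PowerSeries.derivativeFun b := by
  ext n
  rw [coeff_dF, map_sub, map_sub, coeff_dF,
    coeff_dF]
  ring

lemma pd0_sub (a b : AA) : pd0 (a - b) = pd0 a - pd0 b := by
  apply MvPolynomial.ext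
  intro m
  rw [pd0_eq_cw, coeff_cw dF_zero, coeff_sub, coeff_sub, coeff_cw dF_zero, coeff_cw dF_zero]
  exact dF_sub _ _

lemma homogA_sub {a b : AA} {d : ℤ} (ha : homogA a d) (hb : homogA b d) :
    homogA (a - b) d := by
  intro m hm
  rw [mem_support_iff, coeff_sub] at hm
  by_cases h : MvPolynomial.coeff m a = 0
  · rw [h, zero_sub, neg_ne_zero] at hm
    exact hb m (mem_support_iff.mpr hm)
  · exact ha m (mem_support_iff.mpr h)

lemma homogA_zero (d : ℤ) : homogA 0 d := by
  intro m hm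
  simp at hm

lemma pide_algebraMap (c : ℂ) : pide 0 (algebraMap ℂ AA c) = algebraMap ℂ AA c := by
  rw [algebraMap_AA, MvPolynomial.C_apply, pide_monomial, if_pos wdeg_zero]

lemma homogA_pd0 {f : AA} {d : ℤ} (h : homogA f d) : homogA (pd0 f) d :=
  homogA_of_support_subset h (by rw [pd0_eq_cw]; exact support_cw_subset dF_zero f)

lemma coeff_pdH0 (y : AH) (k : ℕ) :
    PowerSeries.coeff (R := AA) k (pdH 0 y) = pd0 (PowerSeries.coeff (R := AA) k y) := by
  unfold pdH lift1
  rw [PowerSeries.coeff_mk]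
  rfl

lemma AA_coeff_zero_C (r : RR) :
    MvPolynomial.coeff (0 : ℕ+ →₀ ℕ) (MvPolynomial.C r : AA) = r := by
  rw [MvPolynomial.C_apply, MvPolynomial.coeff_monomial, if_pos rfl]

/-- Corollary 2.4(1): if h̄ ∈ Λ̂₀ satisfies ∂h̄/∂u = 0, then h̄ = α∫u₀dx + ∫h dx with
∂h/∂u₀ = 0. (Stated on representatives: h₀ represents h̄.) -/
theorem stmt5 (h₀ : AH) (hmem : memAH 0 h₀) (hpd : pdH 0 h₀ ∈ NH) :
    ∃ (α : ℂ) (h : AH), memAH 0 h ∧ pdH 0 h = 0 ∧ h₀ - α • uH 0 - h ∈ NH := by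
  classical
  obtain ⟨g, ψ, hgψ⟩ := NH_decomp hpd
  -- the coefficient-wise equation
  have hco : ∀ k : ℕ, pd0 (PowerSeries.coeff (R := AA) k h₀) =
      dxA (PowerSeries.coeff (R := AA) k g) + algebraMap ℂ AA (PowerSeries.coeff (R := ℂ) k ψ) := by
    intro k
    have h1 := congrArg (PowerSeries.coeff (R := AA) k) hgψ
    rw [map_add, coeff_dxH, PowerSeries.coeff_map, coeff_pdH0] at h1
    exact h1
  have hhom : ∀ k : ℕ, homogA (PowerSeries.coeff (R := AA) k h₀) (k : ℤ) := by
    intro k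
    have h1 := hmem k
    rwa [zero_add] at h1
  -- ψ vanishes in positive degrees
  have hψ : ∀ k : ℕ, k ≠ 0 → PowerSeries.coeff (R := ℂ) k ψ = 0 := by
    intro k hk
    have h0 : MvPolynomial.coeff (0 : ℕ+ →₀ ℕ) (PowerSeries.coeff (R := AA) k h₀) = 0 := by
      apply homogA_coeff_eq_zero (hhom k)
      rw [wdeg_zero]
      exact_mod_cast fun hc => hk (by exact_mod_cast hc.symm)
    have h1 := congrArg (MvPolynomial.coeff (0 : ℕ+ →₀ ℕ)) (hco k)
    rw [pd0_eq_cw, coeff_cw dF_zero, h0, dF_zero, coeff_add, coeff_zero_dxA,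
      algebraMap_AA, AA_coeff_zero_C, zero_add] at h1
    have h2 := congrArg (PowerSeries.constantCoeff (R := ℂ)) h1.symm
    rwa [PowerSeries.constantCoeff_C, map_zero] at h2
  set α := PowerSeries.coeff (R := ℂ) 0 ψ with hα
  -- the sliced antiderivative family
  obtain ⟨q, hq0, hqs⟩ : ∃ q : ℕ → AA, q 0 = 0 ∧
      ∀ j : ℕ, q (j+1) = pide j (PowerSeries.coeff (R := AA) (j+1) g) :=
    ⟨fun k => match k with
      | 0 => 0
      | (j+1) => pide j (PowerSeries.coeff (R := AA) (j+1) g), rfl, fun j => rfl⟩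
  have hhomq : ∀ k : ℕ, homogA (q k) ((k : ℤ) - 1) := by
    intro k
    cases k with
    | zero => rw [hq0]; exact homogA_zero _
    | succ j =>
      rw [hqs j]
      have h1 := homogA_pide j (PowerSeries.coeff (R := AA) (j+1) g)
      have he : ((j : ℤ)) = ((j+1 : ℕ) : ℤ) - 1 := by push_cast; ring
      rwa [he] at h1
  -- the refined coefficient-wise equation
  have href : ∀ k : ℕ, pd0 (PowerSeries.coeff (R := AA) k h₀) =
      dxA (q k) + algebraMap ℂ AA (if k = 0 then α else 0) := by
    intro k
    have hfix : pide k (pd0 (PowerSeries.coeff (R := AA) k h₀)) = pd0 (PowerSeries.coeff (R := AA) k h₀) :=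
      pide_of_homog (homogA_pd0 (hhom k))
    cases k with
    | zero =>
      rw [if_pos rfl]
      have h1 := congrArg (pide 0) (hco 0)
      rw [hfix, pide_add, pide_zero_dxA, pide_algebraMap, zero_add] at h1
      rw [h1, hq0, dxA_zero, zero_add]
    | succ j =>
      rw [if_neg (Nat.succ_ne_zero j), map_zero, add_zero]
      have h1 := congrArg (pide (j+1)) (hco (j+1))
      rw [hψ (j+1) (Nat.succ_ne_zero j), map_zero, add_zero, hfix, pide_dxA] at h1
      rw [h1, hqs j]
  -- the key per-coefficient identity
  have hkey : ∀ k : ℕ, PowerSeries.coeff (R := AA) k h₀ =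
      (if k = 0 then α else 0) • uv 0 +
      (cw psE (PowerSeries.coeff (R := AA) k h₀) - uv 1 * cw psE (q k)) + dxA (cw psInt (q k)) :=
    fun k => keyA _ _ _ (href k)
  refine ⟨α, PowerSeries.mk fun k => cw psE (PowerSeries.coeff (R := AA) k h₀) - uv 1 * cw psE (q k),
    ?_, ?_, ?_⟩
  · -- memAH 0
    intro k
    rw [PowerSeries.coeff_mk, zero_add]
    apply homogA_sub
    · exact homogA_of_support_subset (hhom k) (support_cw_subset psE_zero _)
    · have h1 := homogA_uv1_mul (homogA_of_support_subset (hhomq k)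
        (support_cw_subset psE_zero _))
      rwa [sub_add_cancel] at h1
  · -- pdH 0 _ = 0
    ext k
    rw [coeff_pdH0, PowerSeries.coeff_mk, pd0_sub, pd0_cwE, pd0_uv1_mul, pd0_cwE, mul_zero,
      sub_zero, map_zero]
  · -- the difference is in NH
    have heq : h₀ - α • uH 0 -
        (PowerSeries.mk fun k => cw psE (PowerSeries.coeff (R := AA) k h₀) - uv 1 * cw psE (q k)) =
        dxH (PowerSeries.mk fun k => cw psInt (q k)) := by
      apply PowerSeries.ext
      intro k
      rw [map_sub, map_sub, AH_coeff_smul, coeff_dxH, PowerSeries.coeff_mk,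
        PowerSeries.coeff_mk]
      rw [uH, PowerSeries.coeff_C]
      cases k with
      | zero =>
        have hk := hkey 0
        rw [if_pos rfl] at hk
        rw [if_pos rfl]
        generalize hB : cw psE (PowerSeries.coeff (R := AA) 0 h₀) = B at hk ⊢
        rw [hk]
        abel
      | succ j =>
        have hk := hkey (j+1)
        rw [if_neg (Nat.succ_ne_zero j), zero_smul, zero_add] at hk
        rw [if_neg (Nat.succ_ne_zero j), smul_zero, sub_zero]
        generalize hB : cw psE (PowerSeries.coeff (R := AA) (j+1) h₀) = B at hk ⊢
        rw [hk]
        abel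
    rw [heq]
    exact dxH_mem_NH _

end RiemannPaper
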